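/- Let T be a finite set, let σ₁ and σ₂ be involutions of T with unique fixed points a and b respectively, and let x ∉ T. Define involutions σ₁′ and σ₂′ on T ∪ {x} by: σ₁′ agrees with σ₁ on T ∖ {a}, σ₁′(a) = x, σ₁′(x) = a; and σ₂′ agrees with σ₂ on T ∖ {b}, σ₂′(b) = x, σ₂′(x) = b. Then C(σ₁′ ∘ σ₂′) = C(σ₁ ∘ σ₂) + 1. -/

import Mathlib

open Equiv Equiv.Perm Finset

set_option linter.unusedSectionVars false
set_option linter.unusedVariables false


/-- Number of cycles of a permutation of a finite set, fixed points counting as 1-cycles. -/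
def cycleCount {α : Type*} [Fintype α] [DecidableEq α] (π : Equiv.Perm α) : ℕ :=
  π.cycleType.card + (Finset.univ.filter fun x => π x = x).card

section Aux

variable {α : Type*} [Fintype α] [DecidableEq α]

/-- class of z -/
def cls (π : Perm α) (z : α) : Finset α := univ.filter (π.SameCycle z)

lemma mem_cls {π : Perm α} {z w : α} : w ∈ cls π z ↔ π.SameCycle z w := by
  simp [cls]

lemma cls_eq_of_sameCycle {π : Perm α} {z w : α} (h : π.SameCycle z w) :
    cls π z = cls π w := by
  ext u; simp only [mem_cls]
  exact ⟨fun h' => h.symm.trans h', fun h' => h.trans h'⟩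

lemma cls_fixed {π : Perm α} {z : α} (h : π z = z) : cls π z = {z} := by
  ext w
  simp only [mem_cls, Finset.mem_singleton]
  constructor
  · rintro ⟨k, rfl⟩
    exact (Function.IsFixedPt.perm_zpow h k)
  · rintro rfl; exact Equiv.Perm.SameCycle.refl _ _

lemma cls_support {π : Perm α} {z : α} (h : z ∈ π.support) :
    cls π z = (π.cycleOf z).support := by
  ext w
  simp only [mem_cls, mem_support_cycleOf_iff]
  exact ⟨fun h' => ⟨h', h⟩, fun h' => h'.1⟩

lemma cycleCount_eq (π : Perm α) : cycleCount π = (univ.image (cls π)).card := by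
  classical
  have huniv : (univ : Finset α) = π.support ∪ (univ.filter fun x => π x = x) := by
    ext w; simp [Equiv.Perm.mem_support]
    tauto
  have himg : univ.image (cls π)
      = π.support.image (cls π) ∪ (univ.filter fun x => π x = x).image (cls π) := by
    conv_lhs => rw [huniv]
    rw [Finset.image_union]
  have h1 : π.support.image (cls π) = π.cycleFactorsFinset.image Equiv.Perm.support := by
    ext s
    simp only [Finset.mem_image]
    constructor
    · rintro ⟨z, hz, rfl⟩
      exact ⟨π.cycleOf z, cycleOf_mem_cycleFactorsFinset_iff.2 hz, (cls_support hz).symm⟩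
    · rintro ⟨c, hc, rfl⟩
      obtain ⟨z, hz⟩ := (mem_cycleFactorsFinset_iff.mp hc).1.nonempty_support
      have hzs : z ∈ π.support := by
        have := (mem_cycleFactorsFinset_iff.mp hc).2 z hz
        rw [Equiv.Perm.mem_support] at hz ⊢
        rwa [this] at hz
      refine ⟨z, hzs, ?_⟩
      rw [cls_support hzs, ← cycle_is_cycleOf hz hc]
    
  have h2 : (univ.filter fun x => π x = x).image (cls π)
      = (univ.filter fun x => π x = x).image (fun z => ({z} : Finset α)) := by
    apply Finset.image_congr
    intro z hz
    simp only [Finset.mem_coe, Finset.mem_filter] at hz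
    exact cls_fixed hz.2
  have hdisj : Disjoint (π.support.image (cls π))
      ((univ.filter fun x => π x = x).image (cls π)) := by
    rw [h1, h2, Finset.disjoint_left]
    rintro s hs hs'
    simp only [Finset.mem_image] at hs hs'
    obtain ⟨c, hc, rfl⟩ := hs
    obtain ⟨z, hz, hzeq⟩ := hs'
    obtain ⟨w, hw⟩ := (mem_cycleFactorsFinset_iff.mp hc).1.nonempty_support
    have : w = z := by rw [← hzeq] at *; simpa using hw
    subst this
    have := (mem_cycleFactorsFinset_iff.mp hc).2 w hw
    rw [Equiv.Perm.mem_support] at hw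
    simp only [Finset.mem_filter] at hz
    rw [this, hz.2] at hw
    exact hw rfl
  have hcard1 : (π.cycleFactorsFinset.image Equiv.Perm.support).card
      = π.cycleFactorsFinset.card := by
    apply Finset.card_image_of_injOn
    intro c hc d hd hcd
    simp only [Finset.mem_coe] at hc hd
    by_contra hne
    have hdisj' := (cycleFactorsFinset_pairwise_disjoint π) hc hd hne
    obtain ⟨w, hw⟩ := (mem_cycleFactorsFinset_iff.mp hc).1.nonempty_support
    have hw' : w ∈ d.support := hcd ▸ hw
    rw [Equiv.Perm.mem_support] at hw hw'
    cases (Equiv.Perm.disjoint_iff_eq_or_eq.mp hdisj') w with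
    | inl h => exact hw h
    | inr h => exact hw' h
  have hcard2 : ((univ.filter fun x => π x = x).image (fun z => ({z} : Finset α))).card
      = (univ.filter fun x => π x = x).card := by
    apply Finset.card_image_of_injective
    intro u v huv
    simpa using huv
  have hct : π.cycleType.card = π.cycleFactorsFinset.card := by
    rw [Equiv.Perm.cycleType_def, Multiset.card_map]; rfl
  rw [himg, Finset.card_union_of_disjoint hdisj, h1, h2, hcard1, hcard2, cycleCount, hct]




lemma sameCycle_iff_nat {π : Perm α} {u v : α} :
    π.SameCycle u v ↔ ∃ k : ℕ, (π ^ k) u = v := by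
  constructor
  · intro h
    obtain ⟨i, _, hi⟩ := h.exists_pow_eq'
    exact ⟨i, hi⟩
  · rintro ⟨k, hk⟩
    exact ⟨(k : ℤ), by rwa [zpow_natCast]⟩

lemma sc_mul_swap_forward (π : Perm α) (x y u v : α)
    (h : (π * Equiv.swap x y).SameCycle u v) :
    π.SameCycle u v ∨ (π.SameCycle u x ∧ π.SameCycle y v)
      ∨ (π.SameCycle u y ∧ π.SameCycle x v) := by
  set τ := π * Equiv.swap x y with hτ
  obtain ⟨k, hk⟩ := sameCycle_iff_nat.mp h
  subst hk
  induction k with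
  | zero =>
    left; simpa using Equiv.Perm.SameCycle.refl π u
  | succ k ih =>
    have hstep : (τ ^ (k+1)) u = τ ((τ ^ k) u) := by
      rw [pow_succ', Equiv.Perm.mul_apply]
    set w := (τ ^ k) u with hw
    have hτw : τ w = π (Equiv.swap x y w) := Equiv.Perm.mul_apply _ _ _
    rw [hstep]
    by_cases hwx : w = x
    · rw [hτw, hwx, Equiv.swap_apply_left]
      rcases ih (sameCycle_iff_nat.mpr ⟨k, rfl⟩) with h1 | ⟨h2a, h2b⟩ | ⟨h3a, h3b⟩
      · right; left
        exact ⟨hwx ▸ h1, sameCycle_apply_right.mpr (Equiv.Perm.SameCycle.refl π y)⟩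
      · -- u ~ x and y ~ w = x, so u ~ y, and π y ~ y
        have huy : π.SameCycle u y := h2a.trans ((hwx ▸ h2b).symm)
        left; exact sameCycle_apply_right.mpr huy
      · -- u ~ y and x ~ w = x
        left; exact sameCycle_apply_right.mpr h3a
    · by_cases hwy : w = y
      · rw [hτw, hwy, Equiv.swap_apply_right]
        rcases ih (sameCycle_iff_nat.mpr ⟨k, rfl⟩) with h1 | ⟨h2a, h2b⟩ | ⟨h3a, h3b⟩
        · right; right
          exact ⟨hwy ▸ h1, sameCycle_apply_right.mpr (Equiv.Perm.SameCycle.refl π x)⟩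
        · left; exact sameCycle_apply_right.mpr h2a
        · have hux : π.SameCycle u x := h3a.trans ((hwy ▸ h3b).symm)
          left; exact sameCycle_apply_right.mpr hux
      · rw [hτw, Equiv.swap_apply_of_ne_of_ne hwx hwy]
        rcases ih (sameCycle_iff_nat.mpr ⟨k, rfl⟩) with h1 | ⟨h2a, h2b⟩ | ⟨h3a, h3b⟩
        · left; exact sameCycle_apply_right.mpr h1
        · right; left; exact ⟨h2a, sameCycle_apply_right.mpr h2b⟩
        · right; right; exact ⟨h3a, sameCycle_apply_right.mpr h3b⟩

lemma merge_sameCycle {π : Perm α} {x y : α} (hxy : x ≠ y)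
    (hnc : ¬ π.SameCycle x y) : (π * Equiv.swap x y).SameCycle x y := by
  set τ := π * Equiv.swap x y with hτ
  have hex : ∃ n, 0 < n ∧ (π ^ n) y = y :=
    ⟨orderOf π, orderOf_pos π, by rw [pow_orderOf_eq_one]; rfl⟩
  set n := Nat.find hex with hn
  obtain ⟨hn0, hnfix⟩ := Nat.find_spec hex
  have claim : ∀ k, 1 ≤ k → k ≤ n → (τ ^ k) x = (π ^ k) y := by
    intro k
    induction k with
    | zero => omega
    | succ k ih =>
      intro _ hk1
      by_cases hk0 : k = 0
      · subst hk0
        simp only [zero_add, pow_one]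
        rw [Equiv.Perm.mul_apply, Equiv.swap_apply_left]
      · have hk : 1 ≤ k := by omega
        have hkn : k < n := by omega
        have hik := ih hk (le_of_lt hkn)
        have h1 : (τ ^ (k+1)) x = τ ((τ ^ k) x) := by rw [pow_succ', Equiv.Perm.mul_apply]
        have hne1 : (π ^ k) y ≠ x := by
          intro hcon
          exact hnc (Equiv.Perm.SameCycle.symm ⟨(k : ℤ), by rw [zpow_natCast]; exact hcon⟩)
        have hne2 : (π ^ k) y ≠ y := by
          intro hcon
          exact Nat.find_min hex hkn ⟨by omega, hcon⟩
        rw [h1, hik, Equiv.Perm.mul_apply, Equiv.swap_apply_of_ne_of_ne hne1 hne2,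
          ← Equiv.Perm.mul_apply, ← pow_succ']
    
  exact ⟨(n : ℤ), by rw [zpow_natCast, claim n hn0 le_rfl]; exact hnfix⟩

lemma merge_mono {π : Perm α} {x y : α} (hxy : x ≠ y)
    (hnc : ¬ π.SameCycle x y) {u v : α} (h : π.SameCycle u v) :
    (π * Equiv.swap x y).SameCycle u v := by
  set τ := π * Equiv.swap x y with hτ
  have hts : τ.SameCycle x y := merge_sameCycle hxy hnc
  have hππ : τ * Equiv.swap x y = π := by
    rw [hτ, mul_assoc, Equiv.swap_mul_self, mul_one]
  have h' : (τ * Equiv.swap x y).SameCycle u v := by rwa [hππ]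
  rcases sc_mul_swap_forward τ x y u v h' with h1 | ⟨h2a, h2b⟩ | ⟨h3a, h3b⟩
  · exact h1
  · exact (h2a.trans hts).trans h2b
  · exact (h3a.trans hts.symm).trans h3b

lemma split_not_sameCycle {π : Perm α} {x y : α} (hxy : x ≠ y)
    (hc : π.SameCycle x y) : ¬ (π * Equiv.swap x y).SameCycle x y := by
  set τ := π * Equiv.swap x y with hτ
  have hex : ∃ m, 0 < m ∧ (π ^ m) y = x := by
    obtain ⟨i, _, hi⟩ := hc.symm.exists_pow_eq'
    refine ⟨i, ?_, hi⟩
    rcases Nat.eq_zero_or_pos i with h0 | h0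
    · subst h0; simp at hi; exact absurd hi.symm hxy
    · exact h0
  set m := Nat.find hex with hm
  obtain ⟨hm0, hmfix⟩ := Nat.find_spec hex
  have hA : ∀ j, 1 ≤ j → j < m → (π ^ j) y ≠ y := by
    intro j hj1 hjm hcon
    refine Nat.find_min hex (show m - j < m by omega) ⟨by omega, ?_⟩
    have : (π ^ (m - j)) y = (π ^ (m - j)) ((π ^ j) y) := by rw [hcon]
    rw [this, ← Equiv.Perm.mul_apply, ← pow_add]
    rw [show m - j + j = m by omega]
    exact hmfix
  have hB : ∀ k, 1 ≤ k → k ≤ m → (τ ^ k) x = (π ^ k) y := by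
    intro k
    induction k with
    | zero => omega
    | succ k ih =>
      intro _ hk1
      by_cases hk0 : k = 0
      · subst hk0
        simp only [zero_add, pow_one]
        rw [Equiv.Perm.mul_apply, Equiv.swap_apply_left]
      · have hk : 1 ≤ k := by omega
        have hkn : k < m := by omega
        have hik := ih hk (le_of_lt hkn)
        have h1 : (τ ^ (k+1)) x = τ ((τ ^ k) x) := by rw [pow_succ', Equiv.Perm.mul_apply]
        have hne1 : (π ^ k) y ≠ x := fun hcon => Nat.find_min hex hkn ⟨by omega, hcon⟩
        have hne2 : (π ^ k) y ≠ y := hA k hk hkn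
        rw [h1, hik, Equiv.Perm.mul_apply, Equiv.swap_apply_of_ne_of_ne hne1 hne2,
          ← Equiv.Perm.mul_apply, ← pow_succ']
  have hCfix : Function.IsFixedPt (τ ^ m) x := by
    show (τ ^ m) x = x
    rw [hB m hm0 le_rfl, hmfix]
  intro hcontra
  obtain ⟨i, _, hi⟩ := hcontra.exists_pow_eq'
  set r := i % m with hr
  have hrm : r < m := Nat.mod_lt _ hm0
  have hred : (τ ^ i) x = (τ ^ r) x := by
    conv_lhs => rw [show i = r + m * (i / m) by rw [hr]; exact (Nat.mod_add_div i m).symm]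
    rw [pow_add, Equiv.Perm.mul_apply]
    congr 1
    rw [pow_mul]
    exact hCfix.perm_pow _
  rw [hred] at hi
  rcases Nat.eq_zero_or_pos r with h0 | h0
  · rw [h0] at hi; simp at hi; exact hxy hi
  · rw [hB r h0 (le_of_lt hrm)] at hi
    exact hA r h0 hrm hi
lemma cls_union_of_merge {π : Perm α} {x y : α} (hxy : x ≠ y)
    (hnc : ¬ π.SameCycle x y) {z : α} (hz : π.SameCycle z x ∨ π.SameCycle z y) :
    cls (π * Equiv.swap x y) z = cls π x ∪ cls π y := by
  set τ := π * Equiv.swap x y with hτ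
  have hzx : τ.SameCycle z x := by
    rcases hz with h | h
    · exact merge_mono hxy hnc h
    · exact (merge_mono hxy hnc h).trans (merge_sameCycle hxy hnc).symm
  rw [cls_eq_of_sameCycle hzx]
  ext w
  simp only [mem_cls, Finset.mem_union]
  constructor
  · intro h
    rcases sc_mul_swap_forward π x y x w h with h1 | ⟨h2a, h2b⟩ | ⟨h3a, h3b⟩
    · exact Or.inl h1
    · exact Or.inr h2b
    · exact absurd h3a hnc
  · rintro (h | h)
    · exact merge_mono hxy hnc h
    · exact (merge_sameCycle hxy hnc).trans (merge_mono hxy hnc h)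

lemma cls_eq_of_not_merge {π : Perm α} {x y : α} (hxy : x ≠ y)
    (hnc : ¬ π.SameCycle x y) {z : α} (hzx : ¬ π.SameCycle z x) (hzy : ¬ π.SameCycle z y) :
    cls (π * Equiv.swap x y) z = cls π z := by
  ext w
  simp only [mem_cls]
  constructor
  · intro h
    rcases sc_mul_swap_forward π x y z w h with h1 | ⟨h2a, _⟩ | ⟨h3a, _⟩
    · exact h1
    · exact absurd h2a hzx
    · exact absurd h3a hzy
  · exact merge_mono hxy hnc

lemma merge_count {π : Perm α} {x y : α} (hxy : x ≠ y)
    (hnc : ¬ π.SameCycle x y) :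
    cycleCount π = cycleCount (π * Equiv.swap x y) + 1 := by
  classical
  set τ := π * Equiv.swap x y with hτ
  set A := univ.filter (fun z => ¬π.SameCycle z x ∧ ¬π.SameCycle z y) with hA
  have himgτ : univ.image (cls τ) = insert (cls π x ∪ cls π y) (A.image (cls π)) := by
    ext s
    simp only [Finset.mem_image, Finset.mem_insert, Finset.mem_filter, Finset.mem_univ,
      true_and, hA]
    constructor
    · rintro ⟨z, -, rfl⟩
      by_cases hzx : π.SameCycle z x
      · left; exact cls_union_of_merge hxy hnc (Or.inl hzx)
      · by_cases hzy : π.SameCycle z y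
        · left; exact cls_union_of_merge hxy hnc (Or.inr hzy)
        · right; exact ⟨z, ⟨hzx, hzy⟩, (cls_eq_of_not_merge hxy hnc hzx hzy).symm⟩
    · rintro (rfl | ⟨z, ⟨hzx, hzy⟩, rfl⟩)
      · exact ⟨x, cls_union_of_merge hxy hnc (Or.inl (Equiv.Perm.SameCycle.refl _ _))⟩
      · exact ⟨z, cls_eq_of_not_merge hxy hnc hzx hzy⟩
  have himgπ : univ.image (cls π)
      = insert (cls π x) (insert (cls π y) (A.image (cls π))) := by
    ext s
    simp only [Finset.mem_image, Finset.mem_insert, Finset.mem_filter, Finset.mem_univ,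
      true_and, hA]
    constructor
    · rintro ⟨z, -, rfl⟩
      by_cases hzx : π.SameCycle z x
      · left; exact cls_eq_of_sameCycle hzx
      · by_cases hzy : π.SameCycle z y
        · right; left; exact cls_eq_of_sameCycle hzy
        · right; right; exact ⟨z, ⟨hzx, hzy⟩, rfl⟩
    · rintro (rfl | rfl | ⟨z, -, rfl⟩) <;> exact ⟨_, rfl⟩
  have hself : ∀ z : α, z ∈ cls π z := fun z => mem_cls.mpr (Equiv.Perm.SameCycle.refl _ _)
  have hy_notin : cls π y ∉ A.image (cls π) := by
    simp only [Finset.mem_image, Finset.mem_filter, Finset.mem_univ, true_and, hA]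
    rintro ⟨z, ⟨hzx, hzy⟩, hzeq⟩
    exact hzy (mem_cls.mp (hzeq ▸ hself y))
  have hx_notin : cls π x ∉ insert (cls π y) (A.image (cls π)) := by
    simp only [Finset.mem_insert, Finset.mem_image, Finset.mem_filter, Finset.mem_univ,
      true_and, hA]
    rintro (heq | ⟨z, ⟨hzx, hzy⟩, hzeq⟩)
    · refine hnc (mem_cls.mp ?_).symm
      rw [← heq]; exact hself x
    · exact hzx (mem_cls.mp (hzeq ▸ hself x))
  have hu_notin : (cls π x ∪ cls π y) ∉ A.image (cls π) := by
    simp only [Finset.mem_image, Finset.mem_filter, Finset.mem_univ, true_and, hA]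
    rintro ⟨z, ⟨hzx, hzy⟩, hzeq⟩
    have : x ∈ cls π z := hzeq ▸ Finset.mem_union_left _ (hself x)
    exact hzx (mem_cls.mp this)
  rw [cycleCount_eq, cycleCount_eq, himgτ, himgπ,
    Finset.card_insert_of_notMem hu_notin, Finset.card_insert_of_notMem hx_notin,
    Finset.card_insert_of_notMem hy_notin]

lemma split_count {π : Perm α} {x y : α} (hxy : x ≠ y)
    (hc : π.SameCycle x y) :
    cycleCount (π * Equiv.swap x y) = cycleCount π + 1 := by
  have h := merge_count (π := π * Equiv.swap x y) hxy (split_not_sameCycle hxy hc)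
  rwa [mul_assoc, Equiv.swap_mul_self, mul_one] at h

/-- `optionCongr` as a monoid hom. -/
def mapHom (α : Type*) : Perm α →* Perm (Option α) where
  toFun := Equiv.optionCongr
  map_one' := by ext z; cases z <;> simp
  map_mul' := fun f g => by ext z; cases z <;> simp

lemma optionCongr_zpow (π : Perm α) (k : ℤ) :
    (Equiv.optionCongr π) ^ k = Equiv.optionCongr (π ^ k) :=
  (map_zpow (mapHom α) π k).symm

lemma sameCycle_optionCongr_none {π : Perm α} {v : Option α} :
    Equiv.Perm.SameCycle (Equiv.optionCongr π) none v ↔ v = none := by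
  constructor
  · rintro ⟨k, hk⟩
    rw [optionCongr_zpow] at hk
    simpa using hk.symm
  · rintro rfl; exact Equiv.Perm.SameCycle.refl _ _

lemma sameCycle_optionCongr_some {π : Perm α} {z w : α} :
    Equiv.Perm.SameCycle (Equiv.optionCongr π) (some z) (some w) ↔ π.SameCycle z w := by
  constructor
  · rintro ⟨k, hk⟩
    rw [optionCongr_zpow] at hk
    simp only [Equiv.optionCongr_apply, Option.map_some] at hk
    exact ⟨k, Option.some_injective _ hk⟩
  · rintro ⟨k, hk⟩
    exact ⟨k, by rw [optionCongr_zpow]; simp [hk]⟩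

lemma cls_optionCongr_none (π : Perm α) : cls (Equiv.optionCongr π) none = {none} := by
  apply cls_fixed; simp

lemma cls_optionCongr_some (π : Perm α) (z : α) :
    cls (Equiv.optionCongr π) (some z) = (cls π z).image some := by
  ext w
  cases w with
  | none =>
    simp only [mem_cls, Finset.mem_image]
    constructor
    · intro h
      exact absurd (sameCycle_optionCongr_none.mp h.symm) (by simp)
    · rintro ⟨u, -, h⟩; exact absurd h (by simp)
  | some w =>
    simp only [mem_cls, Finset.mem_image, sameCycle_optionCongr_some]
    constructor
    · intro h; exact ⟨w, h, rfl⟩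
    · rintro ⟨u, hu, hu2⟩
      obtain rfl : u = w := Option.some_injective _ hu2
      exact hu

lemma cycleCount_optionCongr (π : Perm α) :
    cycleCount (Equiv.optionCongr π) = cycleCount π + 1 := by
  classical
  rw [cycleCount_eq, cycleCount_eq]
  have himg : univ.image (cls (Equiv.optionCongr π))
      = insert {none} ((univ.image (cls π)).image (Finset.image some)) := by
    ext s
    simp only [Finset.mem_image, Finset.mem_insert]
    constructor
    · rintro ⟨z, -, rfl⟩
      cases z with
      | none => left; exact cls_optionCongr_none π
      | some z =>
        right
        exact ⟨cls π z, ⟨z, Finset.mem_univ z, rfl⟩, (cls_optionCongr_some π z).symm⟩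
    · rintro (rfl | ⟨t, ⟨z, -, rfl⟩, rfl⟩)
      · exact ⟨none, Finset.mem_univ _, cls_optionCongr_none π⟩
      · exact ⟨some z, Finset.mem_univ _, cls_optionCongr_some π z⟩
  rw [himg]
  have hnotin : ({none} : Finset (Option α)) ∉ (univ.image (cls π)).image (Finset.image some) := by
    simp only [Finset.mem_image]
    rintro ⟨t, -, ht⟩
    have : (none : Option α) ∈ Finset.image some t := ht ▸ Finset.mem_singleton_self _
    simp at this
    
  rw [Finset.card_insert_of_notMem hnotin,
    Finset.card_image_of_injective _ (Finset.image_injective (Option.some_injective α)), add_comm]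
lemma key_ab {σ₁ σ₂ : Perm α} (h1 : σ₁ * σ₁ = 1) (h2 : σ₂ * σ₂ = 1) {a b : α}
    (ha : ∀ y, σ₁ y = y ↔ y = a) (hb : ∀ y, σ₂ y = y ↔ y = b) :
    (σ₁ * σ₂).SameCycle a b := by
  classical
  set π := σ₁ * σ₂ with hπ
  have e1 : σ₁⁻¹ = σ₁ := (eq_inv_of_mul_eq_one_left h1).symm
  have e2 : σ₂⁻¹ = σ₂ := (eq_inv_of_mul_eq_one_left h2).symm
  have hπinv : π⁻¹ = σ₂ * σ₁ := by rw [hπ, mul_inv_rev, e1, e2]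
  have hc1 : MulAut.conj σ₁ π = π⁻¹ := by
    rw [MulAut.conj_apply, e1, hπinv, hπ,
      show σ₁ * (σ₁ * σ₂) * σ₁ = (σ₁ * σ₁) * (σ₂ * σ₁) by group, h1, one_mul]
  have hc2 : MulAut.conj σ₂ π = π⁻¹ := by
    rw [MulAut.conj_apply, e2, hπinv, hπ,
      show σ₂ * (σ₁ * σ₂) * σ₂ = (σ₂ * σ₁) * (σ₂ * σ₂) by group, h2, mul_one]
  have hz1 : ∀ i : ℤ, σ₁ * π ^ i * σ₁ = π ^ (-i) := by
    intro i
    have := map_zpow (MulAut.conj σ₁) π i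
    rw [hc1, inv_zpow, ← zpow_neg] at this
    rw [← this, MulAut.conj_apply, e1]
  have hz2 : ∀ i : ℤ, σ₂ * π ^ i * σ₂ = π ^ (-i) := by
    intro i
    have := map_zpow (MulAut.conj σ₂) π i
    rw [hc2, inv_zpow, ← zpow_neg] at this
    rw [← this, MulAut.conj_apply, e2]
  have hσ1a : σ₁ a = a := (ha a).mpr rfl
  have hinv2 : ∀ y, σ₂ (σ₂ y) = y := by
    intro y
    have : (σ₂ * σ₂) y = (1 : Perm α) y := by rw [h2]
    simpa [Equiv.Perm.mul_apply] using this
  have hpt1 : ∀ i : ℤ, σ₁ ((π ^ i) a) = (π ^ (-i)) a := by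
    intro i
    have := congrArg (fun f : Perm α => f a) (hz1 i)
    simpa [Equiv.Perm.mul_apply, hσ1a] using this
  have hpt2 : ∀ i : ℤ, σ₂ ((π ^ i) a) = (π ^ (-i)) (σ₂ a) := by
    intro i
    have := congrArg (fun f : Perm α => f (σ₂ a)) (hz2 i)
    simpa [Equiv.Perm.mul_apply, hinv2] using this
  have hca : π (σ₂ a) = a := by
    rw [hπ, Equiv.Perm.mul_apply, hinv2, hσ1a]
  have hex : ∃ n, 0 < n ∧ (π ^ n) a = a :=
    ⟨orderOf π, orderOf_pos π, by rw [pow_orderOf_eq_one]; rfl⟩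
  set n := Nat.find hex with hn
  obtain ⟨hn0, hnfix⟩ := Nat.find_spec hex
  have hnfixz : (π ^ (n : ℤ)) a = a := by rwa [zpow_natCast]
  have hper : ∀ i : ℤ, (π ^ (i + n)) a = (π ^ i) a := by
    intro i
    rw [zpow_add, Equiv.Perm.mul_apply, hnfixz]
  rcases Nat.even_or_odd n with ⟨k, hk⟩ | ⟨k, hk⟩
  · exfalso
    have hk0 : 0 < k := by omega
    have hkn : k < n := by omega
    have h1k := hpt1 (k : ℤ)
    have heven : (π ^ (-(k:ℤ))) a = (π ^ (k:ℤ)) a := by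
      rw [← hper (-(k:ℤ)), show -(k:ℤ) + (n:ℤ) = (k:ℤ) by omega]
    rw [heven] at h1k
    have hka := (ha _).mp h1k
    rw [zpow_natCast] at hka
    exact Nat.find_min hex hkn ⟨hk0, hka⟩
  · have h2k := hpt2 (k : ℤ)
    have hstep : (π ^ (-(k:ℤ))) (σ₂ a) = (π ^ (-(k:ℤ) + -1)) a := by
      have hc' : (π ^ (-1 : ℤ)) a = σ₂ a := by
        rw [zpow_neg_one]
        conv_lhs => rw [← hca]
        exact Equiv.symm_apply_apply π (σ₂ a)
      rw [← hc', ← Equiv.Perm.mul_apply, ← zpow_add]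
    have heq : (π ^ (-(k:ℤ) + -1)) a = (π ^ (k:ℤ)) a := by
      rw [← hper (-(k:ℤ) + -1), show -(k:ℤ) + -1 + (n:ℤ) = (k:ℤ) by omega]
    rw [hstep, heq] at h2k
    exact ⟨(k : ℤ), (hb _).mp h2k⟩

end Aux

/-- Let `σ₁, σ₂` be involutions of a finite set `T` with unique fixed
points `a`, `b`, and let `x ∉ T` (modelled by `none` in `Option T`).  Extend them to
involutions `σ₁', σ₂'` of `T ∪ {x}` by `σ₁'(a) = x, σ₁'(x) = a` and `σ₂'(b) = x,
σ₂'(x) = b`.  Then `C(σ₁' ∘ σ₂') = C(σ₁ ∘ σ₂) + 1`. -/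
theorem stmt_2 {T : Type*} [Fintype T] [DecidableEq T]
    (σ₁ σ₂ : Equiv.Perm T) (a b : T)
    (h1 : σ₁ * σ₁ = 1) (h2 : σ₂ * σ₂ = 1)
    (ha : ∀ y, σ₁ y = y ↔ y = a) (hb : ∀ y, σ₂ y = y ↔ y = b)
    (σ₁' σ₂' : Equiv.Perm (Option T))
    (h1' : ∀ y : T, y ≠ a → σ₁' (some y) = some (σ₁ y))
    (h1a : σ₁' (some a) = none) (h1x : σ₁' none = some a)
    (h2' : ∀ y : T, y ≠ b → σ₂' (some y) = some (σ₂ y))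
    (h2b : σ₂' (some b) = none) (h2x : σ₂' none = some b) :
    cycleCount (σ₁' * σ₂') = cycleCount (σ₁ * σ₂) + 1 := by
  classical
  have hσ1a : σ₁ a = a := (ha a).mpr rfl
  have hσ2b : σ₂ b = b := (hb b).mpr rfl
  have hinv2 : ∀ y, σ₂ (σ₂ y) = y := by
    intro y
    have : (σ₂ * σ₂) y = (1 : Equiv.Perm T) y := by rw [h2]
    simpa [Equiv.Perm.mul_apply] using this
  by_cases hab : a = b
  · subst hab
    have hne : σ₁' * σ₂' = Equiv.optionCongr (σ₁ * σ₂) := by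
      apply Equiv.ext
      intro z
      cases z with
      | none =>
        rw [Equiv.Perm.mul_apply, h2x, h1a]
        simp
      | some y =>
        by_cases hy : y = a
        · subst hy
          rw [Equiv.Perm.mul_apply, h2b, h1x]
          simp [Equiv.Perm.mul_apply, hσ1a, hσ2b]
        · rw [Equiv.Perm.mul_apply, h2' y hy]
          have hσ2y : σ₂ y ≠ a := fun h => hy (σ₂.injective (by rw [h, hσ2b]))
          rw [h1' _ hσ2y]
          simp [Equiv.Perm.mul_apply]
    rw [hne, cycleCount_optionCongr]
  · have hba : b ≠ a := fun h => hab h.symm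
    set π := σ₁ * σ₂ with hπ
    set c := σ₂ a with hc
    have hca : π c = a := by
      rw [hπ, Equiv.Perm.mul_apply, hc, hinv2, hσ1a]
    have hcb : c ≠ b := fun h => hab (σ₂.injective (show σ₂ a = σ₂ b by rw [← hc, h, hσ2b]))
    have hπb : π b = σ₁ b := by rw [hπ, Equiv.Perm.mul_apply, hσ2b]
    have hdecomp : σ₁' * σ₂'
        = Equiv.optionCongr π * Equiv.swap none (some c) * Equiv.swap none (some b) := by
      apply Equiv.ext
      intro z
      simp only [Equiv.Perm.mul_apply]
      cases z with
      | none =>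
        rw [h2x, h1' b hba, Equiv.swap_apply_left,
          Equiv.swap_apply_of_ne_of_ne (by simp) (by simp; exact fun h => hcb h.symm)]
        simp [hπb]
      | some y =>
        by_cases hyb : y = b
        · subst hyb
          rw [h2b, h1x, Equiv.swap_apply_right, Equiv.swap_apply_left]
          simp [hca]
        · by_cases hyc : y = c
          · subst hyc
            have hσ2c : σ₂ c = a := by rw [hc, hinv2]
            rw [h2' c hcb, hσ2c, h1a,
              Equiv.swap_apply_of_ne_of_ne (show (some c : Option T) ≠ none by simp)
                (show (some c : Option T) ≠ some b by simpa using hyb),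
              Equiv.swap_apply_right]
            simp
          · rw [h2' y hyb]
            have h2ya : σ₂ y ≠ a := fun h => hyc (by rw [hc, ← h, hinv2])
            rw [h1' _ h2ya,
              Equiv.swap_apply_of_ne_of_ne (show (some y : Option T) ≠ none by simp)
                (show (some y : Option T) ≠ some b by simpa using hyb),
              Equiv.swap_apply_of_ne_of_ne (show (some y : Option T) ≠ none by simp)
                (show (some y : Option T) ≠ some c by simpa using hyc)]
            simp [hπ, Equiv.Perm.mul_apply]
    have hns : (none : Option T) ≠ some c := by simp
    have hnc : ¬ Equiv.Perm.SameCycle (Equiv.optionCongr π) none (some c) := by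
      intro h
      simpa using sameCycle_optionCongr_none.mp h
    have h1step := merge_count (π := Equiv.optionCongr π) hns hnc
    have hmsc := merge_sameCycle (π := Equiv.optionCongr π) hns hnc
    set π₁ := Equiv.optionCongr π * Equiv.swap none (some c) with hπ₁
    have hsc1 : Equiv.Perm.SameCycle π₁ none (some b) := by
      have t2 : Equiv.Perm.SameCycle (Equiv.optionCongr π) (some c) (some a) :=
        sameCycle_optionCongr_some.mpr ⟨(1 : ℤ), by simpa using hca⟩
      have t3 : Equiv.Perm.SameCycle (Equiv.optionCongr π) (some a) (some b) :=
        sameCycle_optionCongr_some.mpr (key_ab h1 h2 ha hb)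
      exact hmsc.trans (merge_mono hns hnc (t2.trans t3))
    have h2step := split_count (π := π₁) (x := none) (y := some b) (by simp) hsc1
    rw [hdecomp]
    have hassoc : Equiv.optionCongr π * Equiv.swap none (some c) * Equiv.swap none (some b)
        = π₁ * Equiv.swap none (some b) := rfl
    rw [hassoc, h2step]
    have hoc := cycleCount_optionCongr π
    omega
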